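/- arXiv:1302.7015 — 2 statements merged into one kernel-verified Lean document; each statement's English description precedes it below -/
import Mathlib

section
/- For the explicit parametrization x(u,v) with f = 0, the partial derivative x_u(u,v) is a nonzero null vector for all (u,v), i.e., ⟨x_u, x_u⟩ = 0. -/
def mink (v w : Fin 3 → ℝ) : ℝ := -(v 0 * w 0) + v 1 * w 1 + v 2 * w 2

noncomputable def xparam (u v : ℝ) : Fin 3 → ℝ :=
  ![(1/(4*Real.sqrt 2)) * (Real.exp u * (3*v^2 + 4*v + 4) - (v^3 + 2*v^2 + 4*v + 4)),
    (1/(12*Real.sqrt 2)) * (Real.exp u * (-3*v^2 + 12*v + 12) + (v^3 - 6*v^2 - 12*v - 12)),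
    (1/6) * (Real.exp u * (3*v^2 + 6*v) - (v^3 + 3*v^2))]

lemma hx (u v : ℝ) : HasDerivAt (fun u' => xparam u' v)
    (![(1/(4*Real.sqrt 2)) * (Real.exp u * (3*v^2 + 4*v + 4)),
       (1/(12*Real.sqrt 2)) * (Real.exp u * (-3*v^2 + 12*v + 12)),
       (1/6) * (Real.exp u * (3*v^2 + 6*v))]) u := by
  rw [hasDerivAt_pi]
  intro i
  fin_cases i <;>
    simp only [xparam, Matrix.cons_val_zero, Matrix.cons_val_one, Matrix.head_cons,
      Matrix.cons_val_two, Matrix.tail_cons]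
  · exact (((Real.hasDerivAt_exp u).mul_const _).sub_const _).const_mul _
  · exact (((Real.hasDerivAt_exp u).mul_const _).add_const _).const_mul _
  · exact (((Real.hasDerivAt_exp u).mul_const _).sub_const _).const_mul _

theorem xu_nonzero_null :
    ∀ u v : ℝ,
      deriv (fun u' => xparam u' v) u ≠ 0 ∧
      mink (deriv (fun u' => xparam u' v) u) (deriv (fun u' => xparam u' v) u) = 0 := by
  intro u v
  rw [(hx u v).deriv]
  have hs : Real.sqrt 2 > 0 := Real.sqrt_pos.mpr (by norm_num)
  have hs2 : Real.sqrt 2 * Real.sqrt 2 = 2 := Real.mul_self_sqrt (by norm_num)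
  have he : Real.exp u > 0 := Real.exp_pos u
  constructor
  · intro h
    have h0 := congrFun h 0
    simp only [Matrix.cons_val_zero, Pi.zero_apply] at h0
    have hp : (3:ℝ)*v^2 + 4*v + 4 > 0 := by nlinarith [sq_nonneg (3*v+2)]
    have : (1/(4*Real.sqrt 2)) * (Real.exp u * (3*v^2 + 4*v + 4)) > 0 := by positivity
    linarith [this, h0.le, h0.ge]
  · simp only [mink, Matrix.cons_val_zero, Matrix.cons_val_one, Matrix.head_cons,
      Matrix.cons_val_two, Matrix.tail_cons]
    have h4 : (Real.sqrt 2)^4 = 4 := by nlinarith [hs2]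
    field_simp
    ring_nf
    have h2 : (Real.sqrt 2)^2 = 2 := Real.sq_sqrt (by norm_num)
    rw [h2]
    ring
end

section
/- For the explicit parametrization x(u,v) with f = 0, the Minkowski inner product ⟨x_u, x_v⟩ vanishes identically, so every tangent plane of the surface is degenerate (lightlike). -/
lemma exp_comp_deriv (K P Q x : ℝ) :
    HasDerivAt (fun t => K * (Real.exp t * P + Q)) (K * (Real.exp x * P)) x := by
  exact (((Real.hasDerivAt_exp x).mul_const P).add_const Q).const_mul K

lemma cubic_comp_deriv (K E a b c s p q r x : ℝ) :
    HasDerivAt (fun t => K * (E * (a*t^2 + b*t + c) + (s*t^3 + p*t^2 + q*t + r)))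
      (K * (E * (2*a*x + b) + (3*s*x^2 + 2*p*x + q))) x := by
  have hq : HasDerivAt (fun t : ℝ => a*t^2 + b*t + c) (a*(2*x) + b*1) x := by
    have h2 := (hasDerivAt_pow 2 x).const_mul a
    have h1 := (hasDerivAt_id x).const_mul b
    have := (h2.add h1).add_const c
    exact this.congr_deriv (by push_cast; ring)
  have hc : HasDerivAt (fun t : ℝ => s*t^3 + p*t^2 + q*t + r)
      (s*(3*x^2) + p*(2*x) + q*1) x := by
    have h3 := (hasDerivAt_pow 3 x).const_mul s
    have h2 := (hasDerivAt_pow 2 x).const_mul p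
    have h1 := (hasDerivAt_id x).const_mul q
    have := ((h3.add h2).add h1).add_const r
    exact this.congr_deriv (by push_cast; ring)
  have := ((hq.const_mul E).add hc).const_mul K
  exact this.congr_deriv (by ring)

theorem xu_xv_orthogonal :
    ∀ u v : ℝ,
      mink (deriv (fun u' => xparam u' v) u) (deriv (fun v' => xparam u v') v) = 0 := by
  intro u v
  have hu : HasDerivAt (fun u' => xparam u' v)
      (![(1/(4*Real.sqrt 2)) * (Real.exp u * (3*v^2 + 4*v + 4)),
         (1/(12*Real.sqrt 2)) * (Real.exp u * (-3*v^2 + 12*v + 12)),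
         (1/6) * (Real.exp u * (3*v^2 + 6*v))]) u := by
    rw [hasDerivAt_pi]
    intro i
    fin_cases i
    · have h := exp_comp_deriv (1/(4*Real.sqrt 2)) (3*v^2 + 4*v + 4)
        (-(v^3 + 2*v^2 + 4*v + 4)) u
      exact h.congr_of_eventuallyEq
        (Filter.Eventually.of_forall (fun t => by simp [xparam]; try ring))
    · have h := exp_comp_deriv (1/(12*Real.sqrt 2)) (-3*v^2 + 12*v + 12)
        (v^3 - 6*v^2 - 12*v - 12) u
      exact h.congr_of_eventuallyEq
        (Filter.Eventually.of_forall (fun t => by simp [xparam]; try ring))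
    · have h := exp_comp_deriv (1/6) (3*v^2 + 6*v) (-(v^3 + 3*v^2)) u
      exact h.congr_of_eventuallyEq
        (Filter.Eventually.of_forall (fun t => by simp [xparam]; try ring))
  have hv : HasDerivAt (fun v' => xparam u v')
      (![(1/(4*Real.sqrt 2)) * (Real.exp u * (2*3*v + 4) + (3*(-1)*v^2 + 2*(-2)*v + -4)),
         (1/(12*Real.sqrt 2)) * (Real.exp u * (2*(-3)*v + 12) + (3*1*v^2 + 2*(-6)*v + -12)),
         (1/6) * (Real.exp u * (2*3*v + 6) + (3*(-1)*v^2 + 2*(-3)*v + 0))]) v := by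
    rw [hasDerivAt_pi]
    intro i
    fin_cases i
    · have h := cubic_comp_deriv (1/(4*Real.sqrt 2)) (Real.exp u) 3 4 4 (-1) (-2) (-4) (-4) v
      exact h.congr_of_eventuallyEq
        (Filter.Eventually.of_forall (fun t => by simp [xparam]; try ring))
    · have h := cubic_comp_deriv (1/(12*Real.sqrt 2)) (Real.exp u) (-3) 12 12 1 (-6) (-12) (-12) v
      exact h.congr_of_eventuallyEq
        (Filter.Eventually.of_forall (fun t => by simp [xparam]; try ring))
    · have h := cubic_comp_deriv (1/6) (Real.exp u) 3 6 0 (-1) (-3) 0 0 v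
      exact h.congr_of_eventuallyEq
        (Filter.Eventually.of_forall (fun t => by simp [xparam]; try ring))
  rw [hu.deriv, hv.deriv]
  have hs : Real.sqrt 2 * Real.sqrt 2 = 2 := Real.mul_self_sqrt (by norm_num)
  have hne : Real.sqrt 2 ≠ 0 := by positivity
  simp only [mink, Matrix.cons_val_zero, Matrix.cons_val_one, Matrix.head_cons,
    Matrix.cons_val_two, Matrix.tail_cons]
  field_simp
  have h2 : Real.sqrt 2 ^ 2 = 2 := Real.sq_sqrt (by norm_num)
  have h4 : Real.sqrt 2 ^ 4 = 4 := by
    have : Real.sqrt 2 ^ 4 = (Real.sqrt 2 ^ 2) ^ 2 := by ring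
    rw [this, h2]; norm_num
  ring_nf
  rw [h2]
  ring
end
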